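/- For all n ≥ 1 and 0 < k ≤ n, the horn inclusion Λ^k[n] → Δ[n] is a retract, in the arrow category of simplicial sets, of the inclusion (Λ^k[n] × Δ[1]) ∪ (Δ[n] × {1}) → Δ[n] × Δ[1]. -/

import Mathlib

open CategoryTheory CategoryTheory.Limits Simplicial MonoidalCategory SSet

universe u

/-- A morphism `f` is a retract of a morphism `g` in the arrow category: there are
morphisms of arrows `f → g → f` composing to the identity of `f`. -/
def RetractArrow {A B X Y : SSet.{u}} (f : A ⟶ B) (g : X ⟶ Y) : Prop :=
  ∃ (s : Arrow.mk f ⟶ Arrow.mk g) (r : Arrow.mk g ⟶ Arrow.mk f), s ≫ r = 𝟙 _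

/-- The vertex `e` of `Δ[1]`, as a morphism `Δ[0] ⟶ Δ[1]`. -/
def vertexMap (e : Fin 2) : (Δ[0] : SSet.{u}) ⟶ Δ[1] :=
  SSet.stdSimplex.map (SimplexCategory.const _ _ e)

/-- The union `(Λ[n, i] × Δ[1]) ∪ (Δ[n] × {e})` inside `Δ[n] × Δ[1]`, i.e. the pushout
of `Λ[n, i] × Δ[1]` and `Δ[n] × {e}` over `Λ[n, i] × {e}`. -/
noncomputable def hornCorner (n : ℕ) (i : Fin (n + 1)) (e : Fin 2) : SSet.{u} :=
  pushout ((Λ[n, i] : SSet.{u}) ◁ vertexMap e) ((horn n i).ι ▷ Δ[0])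

/-- The inclusion `(Λ[n, i] × Δ[1]) ∪ (Δ[n] × {e}) → Δ[n] × Δ[1]`. -/
noncomputable def hornCornerIncl (n : ℕ) (i : Fin (n + 1)) (e : Fin 2) :
    hornCorner.{u} n i e ⟶ Δ[n] ⊗ Δ[1] :=
  pushout.desc ((horn n i).ι ▷ Δ[1]) (Δ[n] ◁ vertexMap e)
    (whisker_exchange ((horn n i).ι) (vertexMap e))

namespace HornRetractAux

variable {n : ℕ}

open SSet.stdSimplex (asOrderHom)

/-- the vertex-level retraction map -/
def g (i : Fin (n + 1)) (j : Fin (n + 1)) (e : Fin 2) : Fin (n + 1) :=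
  if e = 0 then j else max j i

/-- The retraction homotopy `Δ[n] × Δ[1] → Δ[n]`. -/
def Hmap (n : ℕ) (i : Fin (n + 1)) : (Δ[n] ⊗ Δ[1] : SSet.{u}) ⟶ Δ[n] where
  app m := ↾fun σ => stdSimplex.objMk
    { toFun := fun t => g i (asOrderHom σ.1 t) (asOrderHom σ.2 t)
      monotone' := by
        intro a b hab
        have h1 := (asOrderHom σ.1).monotone hab
        have h2 := (asOrderHom σ.2).monotone hab
        simp only
        unfold g
        split_ifs with e1 e2 e2
        · exact h1
        · exact le_max_of_le_left h1
        · exact absurd (le_antisymm (e2 ▸ h2) (Fin.zero_le _)) e1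
        · exact max_le_max h1 le_rfl }
  naturality := fun _ _ _ => rfl

lemma asOrderHom_Hmap_apply (i : Fin (n + 1)) {m : SimplexCategoryᵒᵖ}
    (σ : (Δ[n] ⊗ Δ[1] : SSet.{u}).obj m) (t : Fin (m.unop.len + 1)) :
    asOrderHom ((Hmap n i).app m σ) t = g i (asOrderHom σ.1 t) (asOrderHom σ.2 t) := rfl

/-- If `σ` lies in the horn, so does `H(σ, τ)`. -/
lemma mem_horn_of_mem (i : Fin (n + 1)) {m : SimplexCategoryᵒᵖ}
    (σ : Δ[n].obj m) (τ : (Δ[1] : SSet.{u}).obj m)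
    (hσ : Set.range (asOrderHom σ) ∪ {i} ≠ Set.univ) :
    Set.range (asOrderHom ((Hmap.{u} n i).app m (σ, τ))) ∪ {i} ≠ Set.univ := by
  rw [Set.ne_univ_iff_exists_notMem] at hσ ⊢
  obtain ⟨j, hj⟩ := hσ
  simp only [Set.mem_union, Set.mem_range, Set.mem_singleton_iff, not_or, not_exists] at hj ⊢
  obtain ⟨hj1, hj2⟩ := hj
  refine ⟨j, fun t => ?_, hj2⟩
  show ¬ g i (asOrderHom σ t) (asOrderHom τ t) = j
  unfold g
  split_ifs with he
  · exact hj1 t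
  · intro h
    rcases max_cases (asOrderHom σ t) i with ⟨h1, _⟩ | ⟨h1, h2⟩
    · exact hj1 t (h1 ▸ h)
    · exact hj2 (by rw [h1] at h; exact h.symm)

/-- `H(σ, 1)` lies in the horn (using `0 < i`). -/
lemma mem_horn_of_one (i : Fin (n + 1)) (hi : 0 < (i : ℕ)) {m : SimplexCategoryᵒᵖ}
    (σ : Δ[n].obj m) (c : (Δ[0] : SSet.{u}).obj m) :
    Set.range (asOrderHom ((Hmap.{u} n i).app m (σ, (vertexMap 1).app m c))) ∪ {i}
      ≠ Set.univ := by
  rw [Set.ne_univ_iff_exists_notMem]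
  refine ⟨0, ?_⟩
  simp only [Set.mem_union, Set.mem_range, Set.mem_singleton_iff, not_or, not_exists]
  have h0 : ((0 : Fin (n + 1)) : ℕ) = 0 := rfl
  constructor
  · intro t h
    change g i (asOrderHom σ t) (asOrderHom ((vertexMap.{u} 1).app m c) t) = 0 at h
    have he : asOrderHom ((vertexMap.{u} 1).app m c) t = 1 := rfl
    unfold g at h
    rw [he] at h
    simp only [one_ne_zero, if_false] at h
    have : i ≤ (0 : Fin (n + 1)) := h ▸ le_max_right _ _
    have := Fin.le_iff_val_le_val.mp this
    omega
  · intro h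
    have := congrArg Fin.val h
    omega

/-- Lift a map to `Δ[n]` landing in the horn to a map to the horn. -/
def liftToHorn {X : SSet.{u}} (i : Fin (n + 1)) (f : X ⟶ Δ[n])
    (h : ∀ m x, Set.range (asOrderHom (f.app m x)) ∪ {i} ≠ Set.univ) :
    X ⟶ Λ[n, i] where
  app m := ↾fun x => ⟨f.app m x, h m x⟩
  naturality m₁ m₂ φ := by
    ext x
    apply Subtype.ext
    exact ConcreteCategory.congr_hom (f.naturality φ) x

/-- The map `Λ[n,i] ⊗ Δ[1] ⟶ Λ[n,i]`. -/
noncomputable def HΛ (n : ℕ) (i : Fin (n + 1)) : ((Λ[n, i] : SSet.{u}) ⊗ Δ[1]) ⟶ Λ[n, i] :=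
  liftToHorn i (((horn n i).ι ▷ Δ[1]) ≫ Hmap n i)
    (fun m σ => mem_horn_of_mem i σ.1.1 σ.2 σ.1.2)

/-- The map `Δ[n] ⊗ Δ[0] ⟶ Λ[n,i]` given by `x ↦ H(x, 1)`. -/
noncomputable def HΔ (n : ℕ) (i : Fin (n + 1)) (hi : 0 < (i : ℕ)) :
    ((Δ[n] : SSet.{u}) ⊗ Δ[0]) ⟶ Λ[n, i] :=
  liftToHorn i ((Δ[n] ◁ vertexMap 1) ≫ Hmap n i)
    (fun m σ => mem_horn_of_one i hi σ.1 σ.2)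

lemma HΛ_comm (n : ℕ) (i : Fin (n + 1)) (hi : 0 < (i : ℕ)) :
    ((Λ[n, i] : SSet.{u}) ◁ vertexMap 1) ≫ HΛ n i
      = ((horn n i).ι ▷ Δ[0]) ≫ HΔ n i hi := by
  ext m σ
  rfl

/-- The map `X ⟶ X ⊗ Δ[0]`. -/
def toD0 (X : SSet.{u}) : X ⟶ X ⊗ Δ[0] where
  app m := ↾fun x => (x, stdSimplex.objMk (OrderHom.const _ 0))
  naturality m₁ m₂ f := by
    ext x
    refine Prod.ext rfl ?_
    apply stdSimplex.objEquiv.injective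
    apply SimplexCategory.Hom.ext'
    apply OrderHom.ext
    funext t
    exact @Subsingleton.elim (Fin 1) _ _ _

lemma Hmap_zero (i : Fin (n + 1)) {m : SimplexCategoryᵒᵖ} (σ : Δ[n].obj m)
    (c : (Δ[0] : SSet.{u}).obj m) :
    (Hmap.{u} n i).app m (σ, (vertexMap 0).app m c) = σ := by
  apply stdSimplex.objEquiv.injective
  apply SimplexCategory.Hom.ext'
  apply OrderHom.ext
  funext t
  show g i (asOrderHom σ t) (asOrderHom ((vertexMap.{u} 0).app m c) t) = asOrderHom σ t
  have he : asOrderHom ((vertexMap.{u} 0).app m c) t = 0 := rfl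
  rw [he]
  unfold g
  rw [if_pos rfl]

/-- The retraction `hornCorner n i 1 ⟶ Λ[n, i]`. -/
noncomputable def cornerRetract (n : ℕ) (i : Fin (n + 1)) (hi : 0 < (i : ℕ)) :
    hornCorner.{u} n i 1 ⟶ Λ[n, i] :=
  pushout.desc (HΛ n i) (HΔ n i hi) (HΛ_comm n i hi)

end HornRetractAux

open HornRetractAux in
/-- For all `n ≥ 1` and `0 < i ≤ n`, the horn inclusion `Λ[n, i] → Δ[n]` is a retract,
in the arrow category of simplicial sets, of the inclusion
`(Λ[n, i] × Δ[1]) ∪ (Δ[n] × {1}) → Δ[n] × Δ[1]`. -/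
theorem hornInclusion_retract_of_hornCornerIncl_one
    (n : ℕ) (i : Fin (n + 1)) (hi : 0 < (i : ℕ)) :
    _root_.RetractArrow ((horn n i).ι) (hornCornerIncl.{u} n i 1) := by
  refine ⟨Arrow.homMk (u := toD0 _ ≫ ((Λ[n, i] : SSet.{u}) ◁ vertexMap 0) ≫ pushout.inl _ _)
      (v := toD0 _ ≫ ((Δ[n] : SSet.{u}) ◁ vertexMap 0)) ?_,
    Arrow.homMk (u := cornerRetract n i hi) (v := Hmap n i) ?_, ?_⟩
  · -- section square
    simp only [Arrow.mk_hom]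
    erw [Category.assoc, Category.assoc, pushout.inl_desc]
    rfl
  · -- retraction square
    dsimp only [cornerRetract, hornCornerIncl, Arrow.mk_hom]
    apply pushout.hom_ext
    · erw [pushout.inl_desc_assoc, pushout.inl_desc_assoc]
      rfl
    · erw [pushout.inr_desc_assoc, pushout.inr_desc_assoc]
      rfl
  · -- s ≫ r = 𝟙
    apply Arrow.hom_ext <;> dsimp only [cornerRetract, Arrow.comp_left, Arrow.comp_right, Arrow.id_left,
      Arrow.id_right, Arrow.homMk_left, Arrow.homMk_right]
    · erw [Category.assoc, Category.assoc, pushout.inl_desc]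
      ext m σ
      exact Subtype.ext (Hmap_zero i σ.1 _)
    · ext m σ
      exact Hmap_zero i σ _
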